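/- Let (Ω, P) be a probability space, let X, Y : Ω → Fin n_b be measurable, and let W : Ω → ℝ be square-integrable. Suppose P(X = i ∧ Y = j) = π_i·P̃_{ij} for all i, j, that E[W·1_{X=i, Y=j}] = M_{ij}·π_i·P̃_{ij}, and that E[W²·1_{X=i, Y=j}] = (M_{ij}² + Σ_{ij})·π_i·P̃_{ij} for all i, j, where M and Σ are real matrices. Then Var[W] = π ((P̃ ⊙ M ⊙ M) + (P̃ ⊙ Σ)) 𝟙 − (π (P̃ ⊙ M) 𝟙)². -/

import Mathlib

open MeasureTheory ProbabilityTheory Matrix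

/-- **Theorem 3, Eq. (9) (steady-state variance of holding times).**
If the joint law of `(X, Y)` is `P(X = i ∧ Y = j) = π i * Pt i j`,
`E[W · 1_{X=i, Y=j}] = M i j * π i * Pt i j`, and
`E[W² · 1_{X=i, Y=j}] = (M i j ² + Sig i j) * π i * Pt i j`, then
`Var[W] = π ((Pt ⊙ M ⊙ M) + (Pt ⊙ Σ)) 𝟙 − (π (Pt ⊙ M) 𝟙)²`. -/
theorem steady_state_variance_holding_times
    {Ω : Type*} [MeasurableSpace Ω] (P : Measure Ω) [IsProbabilityMeasure P]
    {n_b : ℕ} (hn : 0 < n_b)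
    (X Y : Ω → Fin n_b) (hX : Measurable X) (hY : Measurable Y)
    (W : Ω → ℝ) (hW : MemLp W 2 P)
    (π : Fin n_b → ℝ) (Pt M Sig : Matrix (Fin n_b) (Fin n_b) ℝ)
    (hjoint : ∀ i j, (P {ω | X ω = i ∧ Y ω = j}).toReal = π i * Pt i j)
    (hmean : ∀ i j, ∫ ω in {ω | X ω = i ∧ Y ω = j}, W ω ∂P = M i j * (π i * Pt i j))
    (hsecond : ∀ i j,
      ∫ ω in {ω | X ω = i ∧ Y ω = j}, (W ω) ^ 2 ∂P = (M i j ^ 2 + Sig i j) * (π i * Pt i j)) :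
    variance W P =
      π ⬝ᵥ ((Pt ⊙ M ⊙ M) + (Pt ⊙ Sig)).mulVec (fun _ => 1)
        - (π ⬝ᵥ (Pt ⊙ M).mulVec (fun _ => 1)) ^ 2 := by
  set s : Fin n_b × Fin n_b → Set Ω := fun p => {ω | X ω = p.1 ∧ Y ω = p.2} with hs_def
  have hs : ∀ p, MeasurableSet (s p) := by
    intro p
    exact (hX (measurableSet_singleton p.1)).inter (hY (measurableSet_singleton p.2))
  have hdisj : Pairwise (Function.onFun Disjoint s) := by
    intro p q hpq
    simp only [Function.onFun, Set.disjoint_left]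
    rintro ω ⟨h1, h2⟩ ⟨h3, h4⟩
    exact hpq (Prod.ext (h1.symm.trans h3) (h2.symm.trans h4))
  have hcover : (⋃ p, s p) = Set.univ := by
    ext ω; simp only [Set.mem_iUnion, Set.mem_univ, iff_true]
    exact ⟨(X ω, Y ω), rfl, rfl⟩
  have key : ∀ f : Ω → ℝ, Integrable f P →
      ∫ ω, f ω ∂P = ∑ i, ∑ j, ∫ ω in s (i, j), f ω ∂P := by
    intro f hf
    rw [← setIntegral_univ, ← hcover,
      integral_iUnion_fintype hs hdisj (fun p => hf.integrableOn)]
    exact (Fintype.sum_prod_type (f := fun p => ∫ ω in s p, f ω ∂P))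
  have hWint : Integrable W P := hW.integrable (by norm_num)
  have hW2int : Integrable (fun ω => (W ω) ^ 2) P := hW.integrable_sq
  have hmean' : ∫ ω, W ω ∂P = π ⬝ᵥ (Pt ⊙ M).mulVec (fun _ => 1) := by
    rw [key W hWint]
    simp only [dotProduct, mulVec, Matrix.hadamard_apply]
    refine Finset.sum_congr rfl fun i _ => ?_
    rw [Finset.mul_sum]
    refine Finset.sum_congr rfl fun j _ => ?_
    rw [hmean i j]; ring
  have hsecond' : ∫ ω, (W ω) ^ 2 ∂P
      = π ⬝ᵥ ((Pt ⊙ M ⊙ M) + (Pt ⊙ Sig)).mulVec (fun _ => 1) := by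
    rw [key _ hW2int]
    simp only [dotProduct, mulVec, Matrix.add_apply, Matrix.hadamard_apply]
    refine Finset.sum_congr rfl fun i _ => ?_
    rw [Finset.mul_sum]
    refine Finset.sum_congr rfl fun j _ => ?_
    rw [hsecond i j]; ring
  rw [variance_eq_sub hW]
  simp only [Pi.pow_apply]
  rw [hmean', hsecond']
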